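/- The function V(x₀, x₁) = 6x₀⁶ + 7x₀⁴ + x₀³ + 10x₀² + 8x₁² satisfies V(0) = 0, V(x) > 0 for x ≠ 0, and ∇V(x)·f(x) ≤ 0 for all x, where f(x₀,x₁) = (-5x₀³ - 2x₀x₁², -9x₀⁴ + 3x₀³x₁ - 4x₁³). -/

import Mathlib

open InnerProductSpace

noncomputable def gradV (x : EuclideanSpace ℝ (Fin 2)) : EuclideanSpace ℝ (Fin 2) :=
  WithLp.toLp 2 ![36 * (x 0) ^ 5 + 28 * (x 0) ^ 3 + 3 * (x 0) ^ 2 + 20 * (x 0), 16 * (x 1)]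

theorem hasGradientAt_V (V : EuclideanSpace ℝ (Fin 2) → ℝ)
    (hV : ∀ x, V x = 6 * (x 0) ^ 6 + 7 * (x 0) ^ 4 + (x 0) ^ 3
      + 10 * (x 0) ^ 2 + 8 * (x 1) ^ 2) (x : EuclideanSpace ℝ (Fin 2)) :
    HasGradientAt V (gradV x) x := by
  rw [hasGradientAt_iff_hasFDerivAt]
  have h0 : HasFDerivAt (fun y : EuclideanSpace ℝ (Fin 2) => y 0)
      (EuclideanSpace.proj (𝕜 := ℝ) (0 : Fin 2)) x :=
    (EuclideanSpace.proj (𝕜 := ℝ) (0 : Fin 2)).hasFDerivAt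
  have h1 : HasFDerivAt (fun y : EuclideanSpace ℝ (Fin 2) => y 1)
      (EuclideanSpace.proj (𝕜 := ℝ) (1 : Fin 2)) x :=
    (EuclideanSpace.proj (𝕜 := ℝ) (1 : Fin 2)).hasFDerivAt
  have p6 : HasFDerivAt (fun y : EuclideanSpace ℝ (Fin 2) => (y 0) ^ 6)
      (((6 : ℕ) * (x 0) ^ 5) • EuclideanSpace.proj (𝕜 := ℝ) (0 : Fin 2)) x :=
    (hasDerivAt_pow 6 (x 0)).comp_hasFDerivAt (f := fun y : EuclideanSpace ℝ (Fin 2) => y 0) x h0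
  have p4 : HasFDerivAt (fun y : EuclideanSpace ℝ (Fin 2) => (y 0) ^ 4)
      (((4 : ℕ) * (x 0) ^ 3) • EuclideanSpace.proj (𝕜 := ℝ) (0 : Fin 2)) x :=
    (hasDerivAt_pow 4 (x 0)).comp_hasFDerivAt (f := fun y : EuclideanSpace ℝ (Fin 2) => y 0) x h0
  have p3 : HasFDerivAt (fun y : EuclideanSpace ℝ (Fin 2) => (y 0) ^ 3)
      (((3 : ℕ) * (x 0) ^ 2) • EuclideanSpace.proj (𝕜 := ℝ) (0 : Fin 2)) x :=
    (hasDerivAt_pow 3 (x 0)).comp_hasFDerivAt (f := fun y : EuclideanSpace ℝ (Fin 2) => y 0) x h0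
  have p2 : HasFDerivAt (fun y : EuclideanSpace ℝ (Fin 2) => (y 0) ^ 2)
      (((2 : ℕ) * (x 0) ^ 1) • EuclideanSpace.proj (𝕜 := ℝ) (0 : Fin 2)) x :=
    (hasDerivAt_pow 2 (x 0)).comp_hasFDerivAt (f := fun y : EuclideanSpace ℝ (Fin 2) => y 0) x h0
  have q2 : HasFDerivAt (fun y : EuclideanSpace ℝ (Fin 2) => (y 1) ^ 2)
      (((2 : ℕ) * (x 1) ^ 1) • EuclideanSpace.proj (𝕜 := ℝ) (1 : Fin 2)) x :=
    (hasDerivAt_pow 2 (x 1)).comp_hasFDerivAt (f := fun y : EuclideanSpace ℝ (Fin 2) => y 1) x h1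
  have hD := ((((p6.const_mul (6:ℝ)).add (p4.const_mul (7:ℝ))).add p3).add
      (p2.const_mul (10:ℝ))).add (q2.const_mul (8:ℝ))
  have hVfun : V = fun y => 6 * (y 0) ^ 6 + 7 * (y 0) ^ 4 + (y 0) ^ 3
      + 10 * (y 0) ^ 2 + 8 * (y 1) ^ 2 := funext hV
  rw [hVfun]
  refine hD.congr_fderiv ?_
  apply ContinuousLinearMap.ext
  intro y
  simp [gradV, PiLp.inner_apply, Fin.sum_univ_two]
  ring

/-- Lyapunov verification for `ẋ₀ = -5x₀³-2x₀x₁², ẋ₁ = -9x₀⁴+3x₀³x₁-4x₁³`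
with `V = 6x₀⁶+7x₀⁴+x₀³+10x₀²+8x₁²`. -/
theorem lyapunov_example_deg6
    (V : EuclideanSpace ℝ (Fin 2) → ℝ)
    (hV : ∀ x, V x = 6 * (x 0) ^ 6 + 7 * (x 0) ^ 4 + (x 0) ^ 3
      + 10 * (x 0) ^ 2 + 8 * (x 1) ^ 2)
    (f : EuclideanSpace ℝ (Fin 2) → EuclideanSpace ℝ (Fin 2))
    (hf : ∀ x, f x 0 = -5 * (x 0) ^ 3 - 2 * (x 0) * (x 1) ^ 2
      ∧ f x 1 = -9 * (x 0) ^ 4 + 3 * (x 0) ^ 3 * (x 1) - 4 * (x 1) ^ 3) :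
    V 0 = 0 ∧ (∀ x, x ≠ 0 → 0 < V x) ∧
    ∀ x, ∑ i, gradient V x i * f x i ≤ 0 := by
  refine ⟨?_, ?_, ?_⟩
  · rw [hV 0]; norm_num
  · intro x hx
    have hcoord : x 0 ≠ 0 ∨ x 1 ≠ 0 := by
      by_contra h
      push_neg at h
      exact hx (by ext i; fin_cases i <;> simp [h.1, h.2])
    rw [hV x]
    rcases hcoord with h | h
    · have h2 : 0 < (x 0) ^ 2 := by positivity
      nlinarith [sq_nonneg ((x 0) ^ 2 + x 0), sq_nonneg (x 0), sq_nonneg (x 1),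
        pow_nonneg (sq_nonneg (x 0)) 3, sq_nonneg ((x 0) ^ 3)]
    · have h2 : 0 < (x 1) ^ 2 := by positivity
      nlinarith [sq_nonneg ((x 0) ^ 2 + x 0), sq_nonneg (x 0),
        pow_nonneg (sq_nonneg (x 0)) 3, sq_nonneg ((x 0) ^ 3)]
  · intro x
    have hg : gradient V x = gradV x := (hasGradientAt_V V hV x).gradient
    rw [hg, Fin.sum_univ_two, (hf x).1, (hf x).2]
    simp only [gradV, WithLp.ofLp_toLp, Matrix.cons_val_zero, Matrix.cons_val_one, Matrix.head_cons]
    set a := x 0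
    set b := x 1
    nlinarith [sq_nonneg ((19/2 : ℝ) * a^2 + (120/19) * a^2 * b),
      sq_nonneg ((6:ℝ) * a^3 + 2 * a * b),
      sq_nonneg ((4:ℝ) * a^2 * b - (21/4) * a * b),
      sq_nonneg ((3:ℝ) * a^2 + (5/2) * a^3),
      sq_nonneg (a^4), sq_nonneg (a^3 * b), sq_nonneg (a^3), sq_nonneg (a^2),
      sq_nonneg (a^2 * b), sq_nonneg (a * b), sq_nonneg (b^2)]
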